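/- Let k ∈ ℂ and L_1, L_2, L_3 > 0. The 6×6 complex matrix M with rows (0,0,−e^{ikL_1},0,1,0), (0,0,0,−1,0,e^{−ikL_1}), (1,0,0,0,−e^{ikL_2},0), (0,e^{−ikL_2},0,0,0,−1), (−e^{ikL_3},0,1,0,0,0), (0,−1,0,e^{−ikL_3},0,0) has nontrivial kernel if and only if e^{−ik(L_1+L_2+L_3)} = 1, in which case the kernel is 2-dimensional. -/
import Mathlib


open Complex

private lemma cv5 (x : ℂ) (u : Fin 5 → ℂ) : Matrix.vecCons x u 5 = u 4 := rfl
private lemma cv4 (x : ℂ) (u : Fin 5 → ℂ) : Matrix.vecCons x u 4 = u 3 := rfl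

/-- The coboundary matrix of a transmission line sheaf on the triangle graph with
oriented edges of lengths `L₁, L₂, L₃` and wavenumber `k`. -/
noncomputable def triangleCoboundary (k : ℂ) (L1 L2 L3 : ℝ) : Matrix (Fin 6) (Fin 6) ℂ :=
  !![0, 0, -exp (I * k * L1), 0, 1, 0;
     0, 0, 0, -1, 0, exp (-(I * k * L1));
     1, 0, 0, 0, -exp (I * k * L2), 0;
     0, exp (-(I * k * L2)), 0, 0, 0, -1;
     -exp (I * k * L3), 0, 1, 0, 0, 0;
     0, -1, 0, exp (-(I * k * L3)), 0, 0]

private lemma triangle_mulVec_eq_zero_iff (k : ℂ) (L1 L2 L3 : ℝ) (x : Fin 6 → ℂ) :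
    (triangleCoboundary k L1 L2 L3).mulVec x = 0 ↔
      (x 4 = exp (I * k * L1) * x 2 ∧ x 3 = exp (-(I * k * L1)) * x 5 ∧
       x 0 = exp (I * k * L2) * x 4 ∧ x 5 = exp (-(I * k * L2)) * x 1 ∧
       x 2 = exp (I * k * L3) * x 0 ∧ x 1 = exp (-(I * k * L3)) * x 3) := by
  rw [triangleCoboundary, funext_iff]
  simp only [Fin.forall_fin_succ, Matrix.mulVec, dotProduct, Fin.sum_univ_six]
  simp [Fin.forall_fin_succ, cv5, cv4, Matrix.vecHead, Matrix.vecTail]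
  constructor
  · rintro ⟨h1, h2, h3, h4, h5, h6⟩
    exact ⟨by linear_combination h1, by linear_combination -h2, by linear_combination h3,
      by linear_combination -h4, by linear_combination h5, by linear_combination -h6⟩
  · rintro ⟨h1, h2, h3, h4, h5, h6⟩
    exact ⟨by linear_combination h1, by linear_combination -h2, by linear_combination h3,
      by linear_combination -h4, by linear_combination h5, by linear_combination -h6⟩

/-- the 6×6 triangle coboundary matrix has nontrivial kernel if and only if
`e^{−ik(L₁+L₂+L₃)} = 1` (resonance), in which case the kernel is 2-dimensional. -/
theorem triangle_kernel_iff_resonance (k : ℂ) (L1 L2 L3 : ℝ)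
    (hL1 : 0 < L1) (hL2 : 0 < L2) (hL3 : 0 < L3) :
    (LinearMap.ker (triangleCoboundary k L1 L2 L3).mulVecLin ≠ ⊥ ↔
      exp (-(I * k * (L1 + L2 + L3))) = 1) ∧
    (exp (-(I * k * (L1 + L2 + L3))) = 1 →
      Module.finrank ℂ (LinearMap.ker (triangleCoboundary k L1 L2 L3).mulVecLin) = 2) := by
  classical
  set a1 : ℂ := exp (I * k * L1) with ha1
  set a2 : ℂ := exp (I * k * L2) with ha2
  set a3 : ℂ := exp (I * k * L3) with ha3
  set b1 : ℂ := exp (-(I * k * L1)) with hb1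
  set b2 : ℂ := exp (-(I * k * L2)) with hb2
  set b3 : ℂ := exp (-(I * k * L3)) with hb3
  have hA : a1 * a2 * a3 = exp (I * k * (↑L1 + ↑L2 + ↑L3)) := by
    rw [ha1, ha2, ha3, ← exp_add, ← exp_add]; ring_nf
  have hB : b1 * b2 * b3 = exp (-(I * k * (↑L1 + ↑L2 + ↑L3))) := by
    rw [hb1, hb2, hb3, ← exp_add, ← exp_add]; ring_nf
  have hABone : exp (I * k * (↑L1 + ↑L2 + ↑L3)) * exp (-(I * k * (↑L1 + ↑L2 + ↑L3))) = 1 := by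
    rw [← exp_add]; ring_nf; exact exp_zero
  have hcast : ((L1 : ℂ) + L2 + L3) = ((L1 + L2 + L3 : ℝ) : ℂ) := by push_cast; ring
  have hb1ne : b1 ≠ 0 := exp_ne_zero _
  have hb2ne : b2 ≠ 0 := exp_ne_zero _
  have hb3ne : b3 ≠ 0 := exp_ne_zero _
  -- membership characterization
  have hmem : ∀ x : Fin 6 → ℂ, x ∈ LinearMap.ker (triangleCoboundary k L1 L2 L3).mulVecLin ↔
      (x 4 = a1 * x 2 ∧ x 3 = b1 * x 5 ∧ x 0 = a2 * x 4 ∧ x 5 = b2 * x 1 ∧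
       x 2 = a3 * x 0 ∧ x 1 = b3 * x 3) := by
    intro x
    rw [LinearMap.mem_ker, Matrix.mulVecLin_apply, triangle_mulVec_eq_zero_iff]
  have key : ∀ x : Fin 6 → ℂ, x ∈ LinearMap.ker (triangleCoboundary k L1 L2 L3).mulVecLin →
      x ≠ 0 → exp (-(I * k * (↑L1 + ↑L2 + ↑L3))) = 1 := by
    intro x hx hx0
    obtain ⟨e1, e2, e3, e4, e5, e6⟩ := (hmem x).1 hx
    by_cases h2 : x 2 = 0
    · have h4 : x 4 = 0 := by rw [e1, h2, mul_zero]
      have h0 : x 0 = 0 := by rw [e3, h4, mul_zero]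
      by_cases h5 : x 5 = 0
      · exfalso
        apply hx0
        have h3 : x 3 = 0 := by rw [e2, h5, mul_zero]
        have h1 : x 1 = 0 := by rw [e6, h3, mul_zero]
        funext i
        fin_cases i <;> assumption
      · -- odd cycle nontrivial : b1 * b2 * b3 = 1
        have : x 5 = (b1 * b2 * b3) * x 5 := by
          conv_lhs => rw [e4, e6, e2]
          ring
        have hbone : b1 * b2 * b3 = 1 :=
          mul_right_cancel₀ h5 (by linear_combination -this : (b1 * b2 * b3) * x 5 = 1 * x 5)
        rw [← hB, hbone]
    · -- even cycle nontrivial : a1 * a2 * a3 = 1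
      have : x 2 = (a1 * a2 * a3) * x 2 := by
        conv_lhs => rw [e5, e3, e1]
        ring
      have haone : a1 * a2 * a3 = 1 :=
        mul_right_cancel₀ h2 (by linear_combination -this : (a1 * a2 * a3) * x 2 = 1 * x 2)
      have : exp (I * k * (↑L1 + ↑L2 + ↑L3)) = 1 := by rw [← hA, haone]
      calc exp (-(I * k * (↑L1 + ↑L2 + ↑L3)))
          = exp (I * k * (↑L1 + ↑L2 + ↑L3)) * exp (-(I * k * (↑L1 + ↑L2 + ↑L3))) := by
            rw [this, one_mul]
        _ = 1 := hABone
  -- the two kernel vectors under resonance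
  have kernel_span : exp (-(I * k * (↑L1 + ↑L2 + ↑L3))) = 1 →
      LinearMap.ker (triangleCoboundary k L1 L2 L3).mulVecLin =
        Submodule.span ℂ {![a2 * a1, 0, 1, 0, a1, 0], ![0, b3 * b1, 0, b1, 0, 1]} := by
    intro hres
    have hb : b1 * b2 * b3 = 1 := by rw [hB, hres]
    have ha : a1 * a2 * a3 = 1 := by
      have := hABone
      rw [← hA, ← hB, hb, mul_one] at this
      exact this
    apply le_antisymm
    · intro x hx
      obtain ⟨e1, e2, e3, e4, e5, e6⟩ := (hmem x).1 hx
      rw [Submodule.mem_span_pair]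
      refine ⟨x 2, x 5, ?_⟩
      funext i
      fin_cases i <;>
        simp [Matrix.cons_val_zero, Matrix.cons_val_one, Matrix.head_cons, cv5, cv4]
      · linear_combination -a2 * e1 - e3
      · linear_combination -b3 * e2 - e6
      · linear_combination -e2
      · linear_combination -e1
    · rw [Submodule.span_le]
      rintro v hv
      simp only [Set.mem_insert_iff, Set.mem_singleton_iff] at hv
      rcases hv with rfl | rfl
      · rw [SetLike.mem_coe, hmem]
        refine ⟨?_, ?_, ?_, ?_, ?_, ?_⟩ <;>
          simp [Matrix.cons_val_zero, Matrix.cons_val_one, Matrix.head_cons, cv5, cv4] <;>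
          linear_combination -ha
      · rw [SetLike.mem_coe, hmem]
        refine ⟨?_, ?_, ?_, ?_, ?_, ?_⟩ <;>
          simp [Matrix.cons_val_zero, Matrix.cons_val_one, Matrix.head_cons, cv5, cv4] <;>
          linear_combination -hb
  constructor
  · constructor
    · intro hne
      obtain ⟨x, hx, hx0⟩ := Submodule.exists_mem_ne_zero_of_ne_bot hne
      exact key x hx hx0
    · intro hres
      rw [kernel_span hres]
      intro hbot
      have : (![0, b3 * b1, 0, b1, 0, 1] : Fin 6 → ℂ) ∈ (⊥ : Submodule ℂ (Fin 6 → ℂ)) := by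
        rw [← hbot]
        exact Submodule.subset_span (by simp)
      rw [Submodule.mem_bot] at this
      have := congrFun this 5
      simp [cv5] at this
  · intro hres
    rw [kernel_span hres]
    have hrange : ({![a2 * a1, 0, 1, 0, a1, 0], ![0, b3 * b1, 0, b1, 0, 1]} : Set (Fin 6 → ℂ)) =
        Set.range ![![a2 * a1, 0, 1, 0, a1, 0], ![0, b3 * b1, 0, b1, 0, 1]] := by
      ext y
      simp [Fin.exists_fin_two, or_comm]
    have hli : LinearIndependent ℂ ![![a2 * a1, 0, 1, 0, a1, 0], ![0, b3 * b1, 0, b1, 0, 1]] := by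
      rw [LinearIndependent.pair_iff]
      intro s t hst
      have h2 := congrFun hst 2
      have h5 := congrFun hst 5
      simp [cv5, cv4] at h2 h5
      exact ⟨h2, h5⟩
    rw [hrange, finrank_span_eq_card hli]
    simp
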